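/- Let g be a finite-dimensional nilpotent Lie algebra over ℂ and d : g* → Λ²g* the Chevalley–Eilenberg differential. Then every closed 2-cochain in Λ²(Ann[g,g]) lies in the image of d if and only if the induced bracket map b' : Λ²(g/C₁g) → C₁g/C₂g is injective; since b' is always surjective, this holds iff b' is an isomorphism, i.e. iff g/C₂g is a free 2-step nilpotent Lie algebra. -/

import Mathlib

set_option linter.unusedSectionVars false
set_option maxHeartbeats 1000000
set_option synthInstance.maxHeartbeats 400000

/-- The Lie bracket of `g`, bundled as a bilinear map. -/
noncomputable def bracketBilin (g : Type*) [LieRing g] [LieAlgebra ℂ g] :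
    g →ₗ[ℂ] g →ₗ[ℂ] g :=
  LinearMap.mk₂ ℂ (fun x y => ⁅x, y⁆) add_lie smul_lie lie_add lie_smul

/-- The Chevalley–Eilenberg differential `d : g* → Λ²g*`, `(dα)(x,y) = -α⁅x,y⁆`,
with `Λ²g*` realised as bilinear forms on `g`. -/
noncomputable def dCE (g : Type*) [LieRing g] [LieAlgebra ℂ g] (α : Module.Dual ℂ g) :
    g →ₗ[ℂ] g →ₗ[ℂ] ℂ :=
  -((bracketBilin g).compr₂ α)

/-- The wedge `α ∧ β` of two linear functionals, as a bilinear form. -/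
noncomputable def wedgeDual (g : Type*) [LieRing g] [LieAlgebra ℂ g]
    (α β : Module.Dual ℂ g) : g →ₗ[ℂ] g →ₗ[ℂ] ℂ :=
  α.smulRight β - β.smulRight α

/-- The wedge of two elements of a module, as an element of the second exterior power. -/
noncomputable def wedge2 {M : Type*} [AddCommGroup M] [Module ℂ M] (x y : M) :
    ⋀[ℂ]^2 M :=
  ⟨ExteriorAlgebra.ιMulti ℂ 2 ![x, y],
    ExteriorAlgebra.ιMulti_range ℂ 2 (Set.mem_range_self _)⟩

/-- The `k`-th term of the lower central series, as a submodule. -/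
noncomputable def lcsSub (g : Type*) [LieRing g] [LieAlgebra ℂ g] (k : ℕ) : Submodule ℂ g :=
  LieSubmodule.toSubmodule (LieModule.lowerCentralSeries ℂ g g k)

section Wedge2Lemmas

variable {M : Type*} [AddCommGroup M] [Module ℂ M]

lemma vec2_upd0 (x x' y : M) : Function.update ![x, y] 0 x' = ![x', y] := by
  funext i; fin_cases i <;> simp [Function.update]

lemma vec2_upd1 (x y y' : M) : Function.update ![x, y] 1 y' = ![x, y'] := by
  funext i; fin_cases i <;> simp [Function.update]

lemma wedge2_add_left (x x' y : M) :
    wedge2 (x + x') y = wedge2 x y + wedge2 x' y := by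
  apply Subtype.ext
  show ExteriorAlgebra.ιMulti ℂ 2 ![x + x', y] = _
  rw [← vec2_upd0 x (x + x') y, (ExteriorAlgebra.ιMulti ℂ 2).map_update_add]
  simp only [vec2_upd0]; rfl

lemma wedge2_smul_left (c : ℂ) (x y : M) :
    wedge2 (c • x) y = c • wedge2 x y := by
  apply Subtype.ext
  show ExteriorAlgebra.ιMulti ℂ 2 ![c • x, y] = _
  rw [← vec2_upd0 x (c • x) y, (ExteriorAlgebra.ιMulti ℂ 2).map_update_smul]
  simp only [vec2_upd0]; rfl

lemma wedge2_add_right (x y y' : M) :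
    wedge2 x (y + y') = wedge2 x y + wedge2 x y' := by
  apply Subtype.ext
  show ExteriorAlgebra.ιMulti ℂ 2 ![x, y + y'] = _
  rw [← vec2_upd1 x y (y + y'), (ExteriorAlgebra.ιMulti ℂ 2).map_update_add]
  simp only [vec2_upd1]; rfl

lemma wedge2_smul_right (c : ℂ) (x y : M) :
    wedge2 x (c • y) = c • wedge2 x y := by
  apply Subtype.ext
  show ExteriorAlgebra.ιMulti ℂ 2 ![x, c • y] = _
  rw [← vec2_upd1 x y (c • y), (ExteriorAlgebra.ιMulti ℂ 2).map_update_smul]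
  simp only [vec2_upd1]; rfl

lemma wedge2_zero_left (y : M) : wedge2 (0 : M) y = 0 := by
  apply Subtype.ext
  show ExteriorAlgebra.ιMulti ℂ 2 ![(0:M), y] = _
  have : (![(0:M), y]) 0 = 0 := rfl
  rw [(ExteriorAlgebra.ιMulti ℂ 2).map_coord_zero 0 this]; rfl

lemma wedge2_swap (x y : M) : wedge2 y x = - wedge2 x y := by
  apply Subtype.ext
  show ExteriorAlgebra.ιMulti ℂ 2 ![y, x] = _
  have h : ![y, x] = ![x, y] ∘ Equiv.swap (0 : Fin 2) 1 := by
    funext i; fin_cases i <;> rfl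
  rw [h, (ExteriorAlgebra.ιMulti ℂ 2 (M := M)).map_swap _ (by decide)]
  rfl

/-- wedge2 as a bilinear map -/
noncomputable def wedge2Bilin (M : Type*) [AddCommGroup M] [Module ℂ M] :
    M →ₗ[ℂ] M →ₗ[ℂ] (⋀[ℂ]^2 M : Submodule ℂ (ExteriorAlgebra ℂ M)) :=
  LinearMap.mk₂ ℂ wedge2 wedge2_add_left wedge2_smul_left wedge2_add_right wedge2_smul_right

lemma ext_wedge2 {N : Type*} [AddCommGroup N] [Module ℂ N]
    (F G : (⋀[ℂ]^2 M : Submodule ℂ (ExteriorAlgebra ℂ M)) →ₗ[ℂ] N)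
    (h : ∀ x y : M, F (wedge2 x y) = G (wedge2 x y)) : F = G := by
  have key : ∀ (z : ExteriorAlgebra ℂ M)
      (_ : z ∈ Submodule.span ℂ (Set.range ⇑(ExteriorAlgebra.ιMulti ℂ 2 (M := M)))),
      ∀ hz : z ∈ ⋀[ℂ]^2 M, F ⟨z, hz⟩ = G ⟨z, hz⟩ := by
    intro z hz'
    induction hz' using Submodule.span_induction with
    | mem z hzm =>
        intro hz
        obtain ⟨v, rfl⟩ := hzm
        have hv : (![v 0, v 1]) = v := by funext i; fin_cases i <;> rfl
        have : (⟨ExteriorAlgebra.ιMulti ℂ 2 v, hz⟩ :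
            (⋀[ℂ]^2 M : Submodule ℂ (ExteriorAlgebra ℂ M))) = wedge2 (v 0) (v 1) := by
          apply Subtype.ext; show _ = ExteriorAlgebra.ιMulti ℂ 2 ![v 0, v 1]; rw [hv]
        rw [this]; exact h _ _
    | zero =>
        intro hz
        have : (⟨(0 : ExteriorAlgebra ℂ M), hz⟩ :
            (⋀[ℂ]^2 M : Submodule ℂ (ExteriorAlgebra ℂ M))) = 0 := rfl
        rw [this, map_zero, map_zero]
    | add a b ha hb iha ihb =>
        intro hz
        have ha2 : a ∈ ⋀[ℂ]^2 M := by
          rw [← ExteriorAlgebra.ιMulti_span_fixedDegree]; exact ha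
        have hb2 : b ∈ ⋀[ℂ]^2 M := by
          rw [← ExteriorAlgebra.ιMulti_span_fixedDegree]; exact hb
        have : (⟨a + b, hz⟩ : (⋀[ℂ]^2 M : Submodule ℂ (ExteriorAlgebra ℂ M))) =
            ⟨a, ha2⟩ + ⟨b, hb2⟩ := rfl
        rw [this, map_add, map_add, iha ha2, ihb hb2]
    | smul c a ha iha =>
        intro hz
        have ha2 : a ∈ ⋀[ℂ]^2 M := by
          rw [← ExteriorAlgebra.ιMulti_span_fixedDegree]; exact ha
        have : (⟨c • a, hz⟩ : (⋀[ℂ]^2 M : Submodule ℂ (ExteriorAlgebra ℂ M))) =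
            c • ⟨a, ha2⟩ := rfl
        rw [this, map_smul, map_smul, iha ha2]
  apply LinearMap.ext
  rintro ⟨z, hz⟩
  exact key z (by rw [ExteriorAlgebra.ιMulti_span_fixedDegree]; exact hz) hz

/-- A bilinear form as a 2-multilinear map. -/
noncomputable def bilinToMulti (B : M →ₗ[ℂ] M →ₗ[ℂ] ℂ) :
    MultilinearMap ℂ (fun _ : Fin 2 => M) ℂ where
  toFun v := B (v 0) (v 1)
  map_update_add' v i x y := by
    fin_cases i <;> simp [Function.update, Fin.isValue]
  map_update_smul' v i c x := by
    fin_cases i <;> simp [Function.update, Fin.isValue]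

noncomputable def bilinToAlt (B : M →ₗ[ℂ] M →ₗ[ℂ] ℂ) (hB : ∀ x, B x x = 0) :
    M [⋀^Fin 2]→ₗ[ℂ] ℂ :=
  ⟨bilinToMulti B, by
    intro v i j hij hne
    have : i = 0 ∧ j = 1 ∨ i = 1 ∧ j = 0 := by omega
    have hv : v 0 = v 1 := by
      rcases this with ⟨h1, h2⟩ | ⟨h1, h2⟩
      · rw [← h1, ← h2]; exact hij
      · rw [← h1, ← h2]; exact hij.symm
    show B (v 0) (v 1) = 0
    rw [hv]; exact hB _⟩

/-- degree-wise family placing an alternating 2-form in degree 2 -/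
noncomputable def fam2 (A : M [⋀^Fin 2]→ₗ[ℂ] ℂ) : (i : ℕ) → M [⋀^Fin i]→ₗ[ℂ] ℂ
  | 2 => A
  | _ => 0

lemma fam2_two (A : M [⋀^Fin 2]→ₗ[ℂ] ℂ) : fam2 A 2 = A := rfl

/-- the induced functional on the second exterior power -/
noncomputable def altToFunctional (A : M [⋀^Fin 2]→ₗ[ℂ] ℂ) :
    (⋀[ℂ]^2 M : Submodule ℂ (ExteriorAlgebra ℂ M)) →ₗ[ℂ] ℂ :=
  (ExteriorAlgebra.liftAlternating (fam2 A)) ∘ₗ (⋀[ℂ]^2 M).subtype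

lemma altToFunctional_wedge2 (A : M [⋀^Fin 2]→ₗ[ℂ] ℂ) (x y : M) :
    altToFunctional A (wedge2 x y) = A ![x, y] := by
  show ExteriorAlgebra.liftAlternating (fam2 A) (ExteriorAlgebra.ιMulti ℂ 2 ![x, y]) = _
  rw [ExteriorAlgebra.liftAlternating_apply_ιMulti, fam2_two]

end Wedge2Lemmas

section LcsLemmas

variable (g : Type*) [LieRing g] [LieAlgebra ℂ g]

lemma lcs1_eq : lcsSub g 1 =
    Submodule.span ℂ {m : g | ∃ x : (⊤ : LieIdeal ℂ g),
      ∃ n : (⊤ : LieSubmodule ℂ g g), ⁅(x : g), (n : g)⁆ = m} := by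
  show LieSubmodule.toSubmodule (LieModule.lowerCentralSeries ℂ g g (0 + 1)) = _
  rw [LieModule.lowerCentralSeries_succ]
  exact LieSubmodule.lieIdeal_oper_eq_linear_span _ _

lemma lcs2_eq : lcsSub g 2 =
    Submodule.span ℂ {m : g | ∃ x : (⊤ : LieIdeal ℂ g),
      ∃ n : (LieModule.lowerCentralSeries ℂ g g 1), ⁅(x : g), (n : g)⁆ = m} := by
  show LieSubmodule.toSubmodule (LieModule.lowerCentralSeries ℂ g g (1 + 1)) = _
  rw [LieModule.lowerCentralSeries_succ]
  exact LieSubmodule.lieIdeal_oper_eq_linear_span _ _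

lemma bracket_mem_lcs1 (x y : g) : ⁅x, y⁆ ∈ lcsSub g 1 := by
  rw [lcs1_eq]
  exact Submodule.subset_span ⟨⟨x, trivial⟩, ⟨y, trivial⟩, rfl⟩

lemma dCE_apply (α : Module.Dual ℂ g) (x y : g) : dCE g α x y = -α ⁅x, y⁆ := by
  simp [dCE, bracketBilin]

/-- `dCE` as a linear map. -/
noncomputable def dCELin : Module.Dual ℂ g →ₗ[ℂ] (g →ₗ[ℂ] g →ₗ[ℂ] ℂ) where
  toFun := dCE g
  map_add' a b := by
    apply LinearMap.ext; intro x; apply LinearMap.ext; intro y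
    simp [dCE_apply]; ring
  map_smul' c a := by
    apply LinearMap.ext; intro x; apply LinearMap.ext; intro y
    simp [dCE_apply]

end LcsLemmas

section SpanLemmas

variable (g : Type*) [LieRing g] [LieAlgebra ℂ g] [FiniteDimensional ℂ g]

lemma bilin_expand {V : Type*} [AddCommGroup V] [Module ℂ V]
    {n : ℕ} (e : Module.Basis (Fin n) ℂ V) (B : V →ₗ[ℂ] V →ₗ[ℂ] ℂ) (u v : V) :
    ∑ i, ∑ j, e.repr u i * e.repr v j * B (e i) (e j) = B u v := by
  conv_rhs => rw [← e.sum_repr u, ← e.sum_repr v]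
  simp only [map_sum, map_smul, LinearMap.sum_apply, LinearMap.smul_apply, smul_eq_mul,
    Finset.mul_sum]
  rw [Finset.sum_comm]
  apply Finset.sum_congr rfl; intro i _
  apply Finset.sum_congr rfl; intro j _
  ring

lemma bilin_expand_swap {V : Type*} [AddCommGroup V] [Module ℂ V]
    {n : ℕ} (e : Module.Basis (Fin n) ℂ V) (B : V →ₗ[ℂ] V →ₗ[ℂ] ℂ)
    (hanti : ∀ v w, B w v = -B v w) (u v : V) :
    ∑ i, ∑ j, e.repr u j * e.repr v i * B (e i) (e j) = -B u v := by
  calc ∑ i, ∑ j, e.repr u j * e.repr v i * B (e i) (e j)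
      = ∑ i, ∑ j, -(e.repr u j * e.repr v i * B (e j) (e i)) := by
        apply Finset.sum_congr rfl; intro i _
        apply Finset.sum_congr rfl; intro j _
        rw [hanti (e j) (e i)]; ring
    _ = -∑ i, ∑ j, e.repr u j * e.repr v i * B (e j) (e i) := by
        simp only [Finset.sum_neg_distrib]
    _ = -∑ j, ∑ i, e.repr u j * e.repr v i * B (e j) (e i) := by
        rw [Finset.sum_comm]
    _ = -B u v := by rw [bilin_expand e B u v]

/-- An antisymmetric bilinear form pulled back from `g ⧸ C₁g` lies in the span of wedges
of annihilating functionals. -/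
lemma mem_wedge_span (B : (g ⧸ lcsSub g 1) →ₗ[ℂ] (g ⧸ lcsSub g 1) →ₗ[ℂ] ℂ)
    (hanti : ∀ v w, B w v = -B v w) :
    ((B ∘ₗ (lcsSub g 1).mkQ).compl₂ (lcsSub g 1).mkQ) ∈
      Submodule.span ℂ {W : g →ₗ[ℂ] g →ₗ[ℂ] ℂ | ∃ α β : Module.Dual ℂ g,
        (∀ z ∈ lcsSub g 1, α z = 0) ∧ (∀ z ∈ lcsSub g 1, β z = 0) ∧
        W = wedgeDual g α β} := by
  set V := g ⧸ lcsSub g 1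
  let e : Module.Basis (Fin (Module.finrank ℂ V)) ℂ V := Module.finBasis ℂ V
  let π := (lcsSub g 1).mkQ
  let α : Fin (Module.finrank ℂ V) → Module.Dual ℂ g := fun i => (e.coord i) ∘ₗ π
  have hα : ∀ i, ∀ z ∈ lcsSub g 1, α i z = 0 := by
    intro i z hz
    have : π z = 0 := (Submodule.Quotient.mk_eq_zero _).2 hz
    simp only [α, LinearMap.comp_apply, this, map_zero]
  have key : ∀ u v : V, ∑ i, ∑ j, 2⁻¹ * B (e i) (e j) *
      (e.repr u i * e.repr v j - e.repr u j * e.repr v i) = B u v := by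
    intro u v
    calc ∑ i, ∑ j, 2⁻¹ * B (e i) (e j) *
          (e.repr u i * e.repr v j - e.repr u j * e.repr v i)
        = 2⁻¹ * ((∑ i, ∑ j, e.repr u i * e.repr v j * B (e i) (e j)) -
            (∑ i, ∑ j, e.repr u j * e.repr v i * B (e i) (e j))) := by
          rw [← Finset.sum_sub_distrib, Finset.mul_sum]
          apply Finset.sum_congr rfl; intro i _
          rw [← Finset.sum_sub_distrib, Finset.mul_sum]
          apply Finset.sum_congr rfl; intro j _
          ring
      _ = B u v := by
          rw [bilin_expand e B u v, bilin_expand_swap e B hanti u v]; ring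
  have heq : ((B ∘ₗ (lcsSub g 1).mkQ).compl₂ (lcsSub g 1).mkQ) =
      ∑ i, ∑ j, (2⁻¹ * B (e i) (e j)) • wedgeDual g (α i) (α j) := by
    apply LinearMap.ext; intro x
    apply LinearMap.ext; intro y
    simp only [LinearMap.compl₂_apply, LinearMap.comp_apply, LinearMap.sum_apply,
      LinearMap.smul_apply, smul_eq_mul, wedgeDual, LinearMap.sub_apply,
      LinearMap.smulRight_apply]
    have hval : ∀ i, α i x = e.repr (π x) i := by intro i; rfl
    have hval' : ∀ i, α i y = e.repr (π y) i := by intro i; rfl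
    simp only [hval, hval']
    exact (key (π x) (π y)).symm
  rw [heq]
  apply Submodule.sum_mem; intro i _
  apply Submodule.sum_mem; intro j _
  apply Submodule.smul_mem
  exact Submodule.subset_span ⟨α i, α j, hα i, hα j, rfl⟩

end SpanLemmas

/-- For a finite-dimensional nilpotent complex Lie algebra `g` and the map
`b' : Λ²(g/C₁g) → C₁g/C₂g` induced by the Lie bracket: every 2-cochain in `Λ²(Ann[g,g])`
lies in the image of the Chevalley–Eilenberg differential `d` iff `b'` is injective;
moreover `b'` is always surjective, so this holds iff `b'` is bijective, i.e. iff
`g/C₂g` is a free 2-step nilpotent Lie algebra. -/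
theorem stmt8 (g : Type*) [LieRing g] [LieAlgebra ℂ g] [FiniteDimensional ℂ g]
    [LieRing.IsNilpotent g]
    (b' : (⋀[ℂ]^2 (g ⧸ lcsSub g 1)) →ₗ[ℂ]
      ((lcsSub g 1) ⧸ (Submodule.comap (lcsSub g 1).subtype (lcsSub g 2))))
    (hb' : ∀ (x y : g) (hxy : ⁅x, y⁆ ∈ lcsSub g 1),
      b' (wedge2 (Submodule.Quotient.mk x) (Submodule.Quotient.mk y)) =
        Submodule.Quotient.mk ⟨⁅x, y⁆, hxy⟩) :
    (Submodule.span ℂ {W : g →ₗ[ℂ] g →ₗ[ℂ] ℂ | ∃ α β : Module.Dual ℂ g,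
          (∀ z ∈ lcsSub g 1, α z = 0) ∧ (∀ z ∈ lcsSub g 1, β z = 0) ∧
          W = wedgeDual g α β} ≤
        Submodule.span ℂ {F : g →ₗ[ℂ] g →ₗ[ℂ] ℂ | ∃ α : Module.Dual ℂ g, F = dCE g α} ↔
      Function.Injective b') ∧
    Function.Surjective b' ∧
    (Submodule.span ℂ {W : g →ₗ[ℂ] g →ₗ[ℂ] ℂ | ∃ α β : Module.Dual ℂ g,
          (∀ z ∈ lcsSub g 1, α z = 0) ∧ (∀ z ∈ lcsSub g 1, β z = 0) ∧
          W = wedgeDual g α β} ≤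
        Submodule.span ℂ {F : g →ₗ[ℂ] g →ₗ[ℂ] ℂ | ∃ α : Module.Dual ℂ g, F = dCE g α} ↔
      Function.Bijective b') := by
  -- Surjectivity of b'
  have hsurj : Function.Surjective b' := by
    intro t
    obtain ⟨z, rfl⟩ := Submodule.Quotient.mk_surjective _ t
    let N : Submodule ℂ g :=
      Submodule.map (lcsSub g 1).subtype ((LinearMap.range b').comap
        (Submodule.comap (lcsSub g 1).subtype (lcsSub g 2)).mkQ)
    have hle : lcsSub g 1 ≤ N := by
      rw [lcs1_eq g, Submodule.span_le]
      rintro m ⟨x, n, rfl⟩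
      refine ⟨⟨⁅(x : g), (n : g)⁆, bracket_mem_lcs1 g _ _⟩, ?_, rfl⟩
      simp only [SetLike.mem_coe, Submodule.mem_comap, Submodule.mkQ_apply]
      exact ⟨wedge2 (Submodule.Quotient.mk (x : g)) (Submodule.Quotient.mk (n : g)),
        hb' _ _ _⟩
    obtain ⟨z', hz', hzz⟩ := hle z.2
    have : z' = z := Subtype.ext hzz
    rw [← this]
    simp only [SetLike.mem_coe, Submodule.mem_comap, Submodule.mkQ_apply] at hz'
    exact hz'
  -- The main equivalence
  have hiff : (Submodule.span ℂ {W : g →ₗ[ℂ] g →ₗ[ℂ] ℂ | ∃ α β : Module.Dual ℂ g,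
          (∀ z ∈ lcsSub g 1, α z = 0) ∧ (∀ z ∈ lcsSub g 1, β z = 0) ∧
          W = wedgeDual g α β} ≤
        Submodule.span ℂ {F : g →ₗ[ℂ] g →ₗ[ℂ] ℂ | ∃ α : Module.Dual ℂ g, F = dCE g α} ↔
      Function.Injective b') := by
    constructor
    · -- forward: the span condition implies b' is injective
      intro hspan
      apply LinearMap.ker_eq_bot.1
      apply LinearMap.ker_eq_bot'.2
      intro ω hω
      haveI : Module.Free ℂ (⋀[ℂ]^2 (g ⧸ lcsSub g 1)) :=
        Module.Free.of_divisionRing ℂ _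
      rw [← Module.forall_dual_apply_eq_zero_iff ℂ ω]
      intro F
      -- associated bilinear form on the quotient
      set V := g ⧸ lcsSub g 1
      let Bb : V →ₗ[ℂ] V →ₗ[ℂ] ℂ := (wedge2Bilin V).compr₂ F
      have hBbapp : ∀ v w : V, Bb v w = F (wedge2 v w) := by
        intro v w; rfl
      have hBanti : ∀ v w : V, Bb w v = -Bb v w := by
        intro v w
        rw [hBbapp, hBbapp, wedge2_swap, map_neg]
      have hmem := mem_wedge_span g Bb hBanti
      have hmem2 := hspan hmem
      -- extract the functional α with dCE g α equal to the pulled-back form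
      have hrange : Submodule.span ℂ
          {F : g →ₗ[ℂ] g →ₗ[ℂ] ℂ | ∃ α : Module.Dual ℂ g, F = dCE g α} ≤
          LinearMap.range (dCELin g) := by
        rw [Submodule.span_le]
        rintro W ⟨a, rfl⟩
        exact ⟨a, rfl⟩
      obtain ⟨αd, hαd⟩ := hrange hmem2
      have hαdapp : ∀ x y : g, -αd ⁅x, y⁆ =
          F (wedge2 (Submodule.Quotient.mk x) (Submodule.Quotient.mk y)) := by
        intro x y
        have := LinearMap.congr_fun (LinearMap.congr_fun hαd x) y
        rw [show (dCELin g) αd = dCE g αd from rfl, dCE_apply] at this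
        rw [this]
        simp only [LinearMap.compl₂_apply, LinearMap.comp_apply, Submodule.mkQ_apply]
        exact hBbapp _ _
      -- αd vanishes on C₂g
      have hαC2 : ∀ z ∈ lcsSub g 2, αd z = 0 := by
        intro z hz
        rw [lcs2_eq g] at hz
        induction hz using Submodule.span_induction with
        | mem m hm =>
            obtain ⟨x, n, rfl⟩ := hm
            have hn1 : (n : g) ∈ lcsSub g 1 := n.2
            have h1 : -αd ⁅(n : g), (x : g)⁆ =
                F (wedge2 (Submodule.Quotient.mk (n : g))
                  (Submodule.Quotient.mk (x : g))) := hαdapp _ _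
            have h2 : (Submodule.Quotient.mk (n : g) : V) = 0 :=
              (Submodule.Quotient.mk_eq_zero _).2 hn1
            rw [h2, wedge2_zero_left, map_zero] at h1
            have h3 : αd ⁅(n : g), (x : g)⁆ = 0 := neg_eq_zero.1 h1
            rw [← lie_skew, map_neg, h3, neg_zero]
        | zero => exact map_zero αd
        | add a b _ _ iha ihb => rw [map_add, iha, ihb, add_zero]
        | smul c a _ iha => rw [map_smul, iha, smul_zero]
      -- the induced functional on C₁g/C₂g
      let ᾱ : ((lcsSub g 1) ⧸ (Submodule.comap (lcsSub g 1).subtype (lcsSub g 2))) →ₗ[ℂ] ℂ :=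
        Submodule.liftQ _ (αd ∘ₗ (lcsSub g 1).subtype) (by
          intro z hz
          rw [LinearMap.mem_ker, LinearMap.comp_apply]
          exact hαC2 _ hz)
      have hFb : F = -(ᾱ ∘ₗ b') := by
        apply ext_wedge2
        intro v w
        obtain ⟨x, rfl⟩ := Submodule.Quotient.mk_surjective _ v
        obtain ⟨y, rfl⟩ := Submodule.Quotient.mk_surjective _ w
        rw [← hαdapp x y]
        rw [LinearMap.neg_apply, LinearMap.comp_apply,
          hb' x y (bracket_mem_lcs1 g x y)]
        rw [show ᾱ (Submodule.Quotient.mk ⟨⁅x, y⁆, bracket_mem_lcs1 g x y⟩) =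
          αd ⁅x, y⁆ from rfl]
      rw [hFb, LinearMap.neg_apply, LinearMap.comp_apply, hω, map_zero, neg_zero]
    · -- converse: injectivity of b' implies the span condition
      intro hinj
      rw [Submodule.span_le]
      rintro W ⟨α, β, hα, hβ, rfl⟩
      set V := g ⧸ lcsSub g 1
      let ᾱ : V →ₗ[ℂ] ℂ := Submodule.liftQ _ α (by
        intro z hz; rw [LinearMap.mem_ker]; exact hα z hz)
      let β' : V →ₗ[ℂ] ℂ := Submodule.liftQ _ β (by
        intro z hz; rw [LinearMap.mem_ker]; exact hβ z hz)
      let C : V →ₗ[ℂ] V →ₗ[ℂ] ℂ := β'.smulRight ᾱ - ᾱ.smulRight β'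
      have hC : ∀ v, C v v = 0 := by
        intro v
        simp only [C, LinearMap.sub_apply, LinearMap.smulRight_apply,
          LinearMap.smul_apply, smul_eq_mul]
        ring
      let A2 := bilinToAlt C hC
      let G := altToFunctional A2
      have hG : ∀ v w : V, G (wedge2 v w) = β' v * ᾱ w - ᾱ v * β' w := by
        intro v w
        rw [show G (wedge2 v w) = altToFunctional A2 (wedge2 v w) from rfl,
          altToFunctional_wedge2]
        show C v w = _
        simp only [C, LinearMap.sub_apply, LinearMap.smulRight_apply,
          LinearMap.smul_apply, smul_eq_mul]
      obtain ⟨L, hL⟩ := b'.exists_leftInverse_of_injective (LinearMap.ker_eq_bot.2 hinj)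
      let γ1 : (lcsSub g 1) →ₗ[ℂ] ℂ :=
        (G ∘ₗ L) ∘ₗ (Submodule.comap (lcsSub g 1).subtype (lcsSub g 2)).mkQ
      obtain ⟨γ, hγ⟩ := LinearMap.exists_extend γ1
      apply Submodule.subset_span
      refine ⟨γ, ?_⟩
      apply LinearMap.ext; intro x
      apply LinearMap.ext; intro y
      rw [dCE_apply]
      have hxy := bracket_mem_lcs1 g x y
      have h1 : γ ⁅x, y⁆ = γ1 ⟨⁅x, y⁆, hxy⟩ := by
        have := LinearMap.congr_fun hγ ⟨⁅x, y⁆, hxy⟩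
        rw [LinearMap.comp_apply] at this
        exact this
      have h2 : γ1 ⟨⁅x, y⁆, hxy⟩ = G (L (b' (wedge2 (Submodule.Quotient.mk x)
          (Submodule.Quotient.mk y)))) := by
        rw [hb' x y hxy]
        rfl
      have h3 : L (b' (wedge2 (Submodule.Quotient.mk x) (Submodule.Quotient.mk y))) =
          wedge2 (Submodule.Quotient.mk x) (Submodule.Quotient.mk y) := by
        have := LinearMap.congr_fun hL (wedge2 (Submodule.Quotient.mk x)
          (Submodule.Quotient.mk y))
        rw [LinearMap.comp_apply] at this
        exact this
      have h4 : ᾱ (Submodule.Quotient.mk x : V) = α x := rfl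
      have h5 : β' (Submodule.Quotient.mk x : V) = β x := rfl
      have h6 : ᾱ (Submodule.Quotient.mk y : V) = α y := rfl
      have h7 : β' (Submodule.Quotient.mk y : V) = β y := rfl
      rw [h1, h2, h3, hG, h4, h5, h6, h7]
      simp only [wedgeDual, LinearMap.sub_apply, LinearMap.smulRight_apply,
        LinearMap.smul_apply, smul_eq_mul]
      ring
  exact ⟨hiff, hsurj, by rw [hiff]; exact ⟨fun h => ⟨h, hsurj⟩, And.left⟩⟩
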